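/- arXiv:1506.01485 — 3 statements merged into one kernel-verified Lean document; each statement's English description precedes it below -/
import Mathlib

section
/- Let Λ be a semiprimary ring and 𝔞 ⊆ Λ an idempotent two-sided ideal. Then there exists an idempotent e ∈ Λ with 𝔞 = ΛeΛ. -/
/-!
STATEMENT 5: In a semiprimary ring `Λ` (Jacobson radical nilpotent and `Λ/J(Λ)`
semisimple), every idempotent two-sided ideal `𝔞` is of the form `ΛeΛ` for some
idempotent `e ∈ Λ`.  Two-sided ideals are formalized as left ideals closed under
right multiplication, `ΛeΛ` as the left ideal generated by all `r * e * s`.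
-/

/-- `Λ` is semiprimary: the Jacobson radical `J = J(Λ)` is nilpotent and the
quotient `Λ/J` is a semisimple ring (equivalently, semisimple as `Λ`-module). -/
def IsSemiprimaryRing' (Λ : Type) [Ring Λ] : Prop :=
  (∃ n : ℕ, (Ideal.jacobson (⊥ : Ideal Λ)) ^ n = ⊥) ∧
    IsSemisimpleModule Λ (Λ ⧸ Ideal.jacobson (⊥ : Ideal Λ))

open Polynomial

/-- Newton-type iteration for lifting idempotents: `x ↦ 3x² - 2x³`. -/
noncomputable def newtonPoly : ℕ → Polynomial ℤ
  | 0 => X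
  | k + 1 => 3 * (newtonPoly k) ^ 2 - 2 * (newtonPoly k) ^ 3

lemma newtonPoly_sq_sub (k : ℕ) :
    ((X : Polynomial ℤ) ^ 2 - X) ^ (2 ^ k) ∣ (newtonPoly k) ^ 2 - newtonPoly k := by
  induction k with
  | zero => simpa [newtonPoly] using dvd_refl ((X : Polynomial ℤ) ^ 2 - X)
  | succ k ih =>
    have key : (newtonPoly (k + 1)) ^ 2 - newtonPoly (k + 1)
        = ((newtonPoly k) ^ 2 - newtonPoly k) ^ 2 *
          (4 * (newtonPoly k) ^ 2 - 4 * newtonPoly k - 3) := by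
      simp only [newtonPoly]
      ring
    rw [key, pow_succ 2 k, pow_mul]
    exact Dvd.dvd.mul_right (pow_dvd_pow_of_dvd ih 2) _

lemma newtonPoly_X_dvd (k : ℕ) : (X : Polynomial ℤ) ∣ newtonPoly k := by
  induction k with
  | zero => simp [newtonPoly]
  | succ k ih =>
    have : newtonPoly (k + 1) = (3 * newtonPoly k - 2 * (newtonPoly k) ^ 2) * newtonPoly k := by
      simp only [newtonPoly]; ring
    rw [this]
    exact Dvd.dvd.mul_left ih _

lemma newtonPoly_sub_X (k : ℕ) :
    ((X : Polynomial ℤ) ^ 2 - X) ∣ newtonPoly k - X := by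
  induction k with
  | zero => simp [newtonPoly]
  | succ k ih =>
    have hq : ((X : Polynomial ℤ) ^ 2 - X) ∣ (newtonPoly k) ^ 2 - newtonPoly k :=
      dvd_trans (dvd_pow_self _ (Nat.pos_of_ne_zero (by positivity)).ne') (newtonPoly_sq_sub k)
    have key : newtonPoly (k + 1) - X
        = ((newtonPoly k) ^ 2 - newtonPoly k) * (1 - 2 * newtonPoly k) + (newtonPoly k - X) := by
      simp only [newtonPoly]; ring
    rw [key]
    exact dvd_add (hq.mul_right _) ih

theorem idempotent_ideal_eq_span_idempotent
    (Λ : Type) [Ring Λ] (hΛ : IsSemiprimaryRing' Λ)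
    (𝔞 : Ideal Λ) (htwosided : ∀ a ∈ 𝔞, ∀ r : Λ, a * r ∈ 𝔞)
    (hidem : 𝔞 * 𝔞 = 𝔞) :
    ∃ e : Λ, IsIdempotentElem e ∧
      𝔞 = Ideal.span {x : Λ | ∃ r s : Λ, x = r * e * s} := by
  classical
  obtain ⟨⟨n0, hJn0⟩, hss⟩ := hΛ
  haveI : IsSemisimpleModule Λ (Λ ⧸ Ideal.jacobson (⊥ : Ideal Λ)) := hss
  set J : Ideal Λ := Ideal.jacobson ⊥ with hJdef
  set n : ℕ := n0 + 1 with hn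
  have hJn : J ^ n = ⊥ := by rw [hn, Submodule.pow_succ, hJn0, Ideal.bot_mul]
  set pr := J.mkQ with hpr
  set abar : Submodule Λ (Λ ⧸ J) := Submodule.map pr 𝔞 with habar
  obtain ⟨c, hc⟩ := exists_isCompl abar
  have h1 : pr 1 ∈ abar ⊔ c := by rw [hc.sup_eq_top]; trivial
  obtain ⟨x, hx, y, hy, hxy⟩ := Submodule.mem_sup.mp h1
  -- every element of 𝔞 acts on x to recover its image
  have key : ∀ m ∈ 𝔞, pr m = m • x := by
    intro m hm
    have h2 : pr m = m • x + m • y := by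
      have hm1 : pr m = m • pr 1 := by
        rw [← map_smul, smul_eq_mul, mul_one]
      rw [hm1, ← hxy, smul_add]
    have h3 : m • y ∈ abar ⊓ c := by
      constructor
      · have h4 : m • y = pr m - m • x := by rw [h2]; abel
        rw [h4]
        exact Submodule.sub_mem _ (Submodule.mem_map_of_mem hm) (abar.smul_mem m hx)
      · exact c.smul_mem m hy
    rw [hc.inf_eq_bot, Submodule.mem_bot] at h3
    rw [h2, h3, add_zero]
  obtain ⟨a, ha, hax⟩ := Submodule.mem_map.mp hx
  have hprmul : ∀ z w : Λ, pr (z * w) = z • pr w := by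
    intro z w
    rw [← map_smul, smul_eq_mul]
  have hta : a * a - a ∈ J := by
    have h4 : pr (a * a) = pr a := by
      rw [hprmul a a, hax, ← key a ha]
      exact hax
    have := (Submodule.Quotient.eq J).mp h4
    simpa [pr] using this
  -- nilpotency of a*a - a
  have htn : (a * a - a) ^ n = 0 := by
    have : (a * a - a) ^ n ∈ J ^ n := Ideal.pow_mem_pow hta n
    rw [hJn] at this
    simpa using this
  -- the lifted idempotent
  set e : Λ := aeval a (newtonPoly n) with he
  have hXX : (aeval a) ((X : Polynomial ℤ) ^ 2 - X) = a * a - a := by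
    simp [sq]
  have hz : (a * a - a) ^ (2 ^ n) = 0 := by
    have hle : n ≤ 2 ^ n := Nat.le_of_lt (Nat.lt_two_pow_self (n := n))
    calc (a * a - a) ^ (2 ^ n)
        = (a * a - a) ^ n * (a * a - a) ^ (2 ^ n - n) := by
          rw [← pow_add, Nat.add_sub_cancel' hle]
      _ = 0 := by rw [htn, zero_mul]
  have he_idem : IsIdempotentElem e := by
    obtain ⟨p, hp⟩ := newtonPoly_sq_sub n
    have h5 : e * e - e = (a * a - a) ^ (2 ^ n) * aeval a p := by
      have := congrArg (aeval a) hp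
      simpa [map_sub, map_mul, map_pow, hXX, sq, he] using this
    have h5' : e * e - e = 0 := by rw [h5, hz, zero_mul]
    exact sub_eq_zero.mp h5'
  have he𝔞 : e ∈ 𝔞 := by
    obtain ⟨p2, hp2⟩ := newtonPoly_X_dvd n
    have : e = a * aeval a p2 := by
      rw [he, hp2, map_mul, aeval_X]
    rw [this]
    exact htwosided a ha _
  have heJ : e - a ∈ J := by
    obtain ⟨p3, hp3⟩ := newtonPoly_sub_X n
    have h6 : newtonPoly n - X = p3 * ((X : Polynomial ℤ) ^ 2 - X) := by
      rw [hp3]; ring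
    have h7 : e - a = aeval a p3 * (a * a - a) := by
      have := congrArg (aeval a) h6
      simpa [map_sub, map_mul, hXX, he] using this
    rw [h7]
    exact J.smul_mem _ hta
  have hpre : pr e = x := by
    have : pr e = pr a := by
      have := (Submodule.Quotient.eq J).mpr heJ
      simpa [pr] using this
    rw [this, hax]
  set A : Ideal Λ := Ideal.span {x : Λ | ∃ r s : Λ, x = r * e * s} with hA
  -- A ⊆ 𝔞
  have hA𝔞 : A ≤ 𝔞 := by
    rw [hA, Ideal.span_le]
    rintro z ⟨r, s, rfl⟩
    exact htwosided _ (Ideal.mul_mem_left 𝔞 r he𝔞) s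
  -- A is closed under right multiplication
  have hAr : ∀ z ∈ A, ∀ t : Λ, z * t ∈ A := by
    intro z hz t
    rw [hA] at hz ⊢
    induction hz using Submodule.span_induction with
    | mem w hw =>
      obtain ⟨r, s, rfl⟩ := hw
      exact Ideal.subset_span ⟨r, s * t, by rw [mul_assoc, mul_assoc]⟩
    | zero => simpa using Ideal.zero_mem _
    | add u v _ _ hu hv => rw [add_mul]; exact Ideal.add_mem _ hu hv
    | smul r u _ hu =>
      rw [smul_eq_mul, mul_assoc]
      exact Ideal.mul_mem_left _ r hu
  -- elements of 𝔞 are congruent to their e-multiple mod J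
  have keydiff : ∀ z ∈ 𝔞, z - z * e ∈ J := by
    intro z hz
    have h8 : pr z = pr (z * e) := by
      rw [hprmul z e, hpre, key z hz]
    have := (Submodule.Quotient.eq J).mp h8
    simpa [pr] using this
  -- base step: 𝔞 ≤ A ⊔ 𝔞 * J
  have base : 𝔞 ≤ A ⊔ 𝔞 * J := by
    intro w hw
    rw [← hidem, ← Ideal.smul_eq_mul] at hw
    refine Submodule.smul_induction_on hw ?_ ?_
    · intro y hy' z hz'
      have hsplit : y • z = (y * z) * e * 1 + y * (z - z * e) := by
        rw [smul_eq_mul]; noncomm_ring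
      rw [hsplit]
      refine Submodule.add_mem _ (Submodule.mem_sup_left ?_) (Submodule.mem_sup_right ?_)
      · exact Ideal.subset_span ⟨y * z, 1, rfl⟩
      · exact Ideal.mul_mem_mul hy' (keydiff z hz')
    · intro u v hu hv
      exact Submodule.add_mem _ hu hv
  -- pushing down powers of J
  have push : ∀ k : ℕ, 𝔞 * J ^ (k + 1) ≤ A ⊔ 𝔞 * J ^ (k + 2) := by
    intro k
    rw [← Ideal.smul_eq_mul]
    refine Submodule.smul_le.mpr ?_
    intro w hw j hj
    obtain ⟨α, hα, v, hv, hwv⟩ := Submodule.mem_sup.mp (base hw)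
    have : w • j = α * j + v * j := by rw [smul_eq_mul, ← hwv, add_mul]
    rw [this]
    refine Submodule.add_mem _ (Submodule.mem_sup_left (hAr α hα j)) (Submodule.mem_sup_right ?_)
    have hvj : v * j ∈ (𝔞 * J) * J ^ (k + 1) := Ideal.mul_mem_mul hv hj
    have hcomm : ∀ m : ℕ, J * J ^ (m + 1) = J ^ (m + 1) * J := by
      intro m
      induction m with
      | zero => rw [Submodule.pow_one]
      | succ m ih =>
        rw [Submodule.pow_succ (n := m + 1), ← Ideal.mul_assoc, ih, Ideal.mul_assoc]
    have h9 : (J : Ideal Λ) ^ (k + 2) = J ^ (k + 1) * J := rfl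
    have hassoc : (𝔞 * J) * J ^ (k + 1) = 𝔞 * J ^ (k + 2) := by
      rw [Ideal.mul_assoc, hcomm k, h9, ← Ideal.mul_assoc]
    rwa [hassoc] at hvj
  -- induction: 𝔞 ≤ A ⊔ 𝔞 * J ^ (k+1)
  have ind : ∀ k : ℕ, 𝔞 ≤ A ⊔ 𝔞 * J ^ (k + 1) := by
    intro k
    induction k with
    | zero => simpa [Submodule.pow_one] using base
    | succ k ih =>
      refine le_trans ih ?_
      have := push k
      calc A ⊔ 𝔞 * J ^ (k + 1) ≤ A ⊔ (A ⊔ 𝔞 * J ^ (k + 2)) := sup_le_sup_left this A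
        _ = A ⊔ 𝔞 * J ^ (k + 2) := by rw [← sup_assoc, sup_idem]
  have h𝔞A : 𝔞 ≤ A := by
    have := ind n0
    rw [← hn, hJn, Ideal.mul_bot, sup_bot_eq] at this
    exact this
  exact ⟨e, he_idem, le_antisymm h𝔞A hA𝔞⟩
end

section
/- Let A be a highest weight category with standard objects Δ₁,…,Δₙ and let Γ = End(Δₙ). Then Δₙ is a projective object of A, and for every object X of A with Hom(Δₙ, X) ≠ 0 considered via the counit ε_X : Hom(Δₙ,X) ⊗_Γ Δₙ → X, if X lies in Filt(Δ₁,…,Δₙ) then ε_X is a monomorphism. -/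
/-!
STATEMENT 10: Let `A` be a highest weight category with standard objects
`Δ₁, …, Δₙ` and `Γ = End Δₙ`.  Then `Δₙ` is projective, and for every
`X ∈ Filt(Δ₁, …, Δₙ)` the counit `ε_X : Hom(Δₙ, X) ⊗_Γ Δₙ → X` is a
monomorphism.  Since `Γ` is a division ring, `Hom(Δₙ, X) ⊗_Γ Δₙ ≅ Δₙ^r` via a
`Γ`-basis of `Hom(Δₙ, X)`, so the counit being mono is formalized as: for every
`Γ`-linearly independent family `φ₁, …, φ_r : Δₙ → X` (with the right
`Γ = End Δₙ`-action by precomposition), the induced map `Δₙ^r → X` is a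
monomorphism.
-/

open CategoryTheory Limits

attribute [local instance] CategoryTheory.Abelian.hasFiniteBiproducts

universe w v u

variable (A : Type u) [Category.{v} A] [Abelian A]

/-- Objects of `A` admitting a finite filtration whose factors satisfy `S`. -/
inductive FiltBy (S : A → Prop) : A → Prop
  | of_isZero (X : A) : IsZero X → FiltBy S X
  | step (Sc : ShortComplex A) : Sc.ShortExact → FiltBy S Sc.X₁ → S Sc.X₃ → FiltBy S Sc.X₂

/-- Objects of finite (composition) length. -/
inductive FinLength : A → Prop
  | of_isZero (X : A) : IsZero X → FinLength X
  | step (Sc : ShortComplex A) : Sc.ShortExact → FinLength Sc.X₁ → Simple Sc.X₃ → FinLength Sc.X₂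

/-- `A` is a length category: every object has a finite composition series. -/
def IsLengthCategory : Prop := ∀ X : A, FinLength A X

/-- `A` has only finitely many simple objects up to isomorphism. -/
def HasFinitelyManySimples : Prop :=
  ∃ (k : ℕ) (T : Fin k → A), (∀ i, Simple (T i)) ∧
    ∀ X : A, Simple X → ∃ i, Nonempty (X ≅ T i)

/-- A highest weight structure on an abelian category: standard objects
`Δ 0, …, Δ (n-1)` together with short exact sequences `0 → U i → P i → Δ i → 0`
such that each `End (Δ i)` is a division ring, `Hom (Δ i, Δ j) = 0` for `i > j`,
`U i` is filtered by `Δ (i+1), …, Δ (n-1)` and `⨁ P` is a projective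
generator. -/
structure HighestWeightStructure where
  n : ℕ
  Δ : Fin n → A
  P : Fin n → A
  U : Fin n → A
  ι : ∀ i, U i ⟶ P i
  π : ∀ i, P i ⟶ Δ i
  w : ∀ i, ι i ≫ π i = 0
  shortExact : ∀ i, (ShortComplex.mk (ι i) (π i) (w i)).ShortExact
  endo_division : ∀ i, ¬ IsZero (Δ i) ∧ ∀ φ : Δ i ⟶ Δ i, φ ≠ 0 → IsIso φ
  hom_vanish : ∀ i j : Fin n, j < i → ∀ φ : Δ i ⟶ Δ j, φ = 0
  U_filt : ∀ i, FiltBy A (fun X => ∃ j : Fin n, i < j ∧ Nonempty (X ≅ Δ j)) (U i)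
  projective : Projective (⨁ P)
  generator : ∀ X : A, ∃ (r : ℕ) (p : (⨁ fun _ : Fin r => ⨁ P) ⟶ X), Epi p

private lemma filtBy_isZero_of_forall_not {S : A → Prop} (h : ∀ Z, ¬ S Z) {X : A}
    (hX : FiltBy A S X) : IsZero X := by
  induction hX with
  | of_isZero Y h0 => exact h0
  | step Sc hse h1 h3 _ => exact absurd h3 (h _)

theorem hwc_last_standard_projective_and_counit_mono
    (hA : IsLengthCategory A) (hS : HasFinitelyManySimples A)
    (H : HighestWeightStructure A) (hn : 0 < H.n) :
    Projective (H.Δ ⟨H.n - 1, by omega⟩) ∧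
    (∀ X : A, FiltBy A (fun Z => ∃ j, Nonempty (Z ≅ H.Δ j)) X →
      ∀ (r : ℕ) (φ : Fin r → (H.Δ ⟨H.n - 1, by omega⟩ ⟶ X)),
        (∀ c : Fin r → (H.Δ ⟨H.n - 1, by omega⟩ ⟶ H.Δ ⟨H.n - 1, by omega⟩),
            (∑ i, c i ≫ φ i) = 0 → ∀ i, c i = 0) →
        Mono (biproduct.desc φ)) := by
  classical
  set l : Fin H.n := ⟨H.n - 1, by omega⟩ with hldef
  have hlval : (l : ℕ) = H.n - 1 := rfl
  have hmax : ∀ j : Fin H.n, j ≠ l → j < l := by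
    intro j hj
    have h1 := j.isLt
    have h2 : (j : ℕ) ≠ H.n - 1 := fun h => hj (Fin.ext (h.trans hlval.symm))
    rw [Fin.lt_def, hlval]
    omega
  -- `U l` is zero since nothing can be strictly above `l`
  have hU : IsZero (H.U l) := by
    refine filtBy_isZero_of_forall_not A ?_ (H.U_filt l)
    rintro Z ⟨j, hj, -⟩
    have h1 := j.isLt
    rw [Fin.lt_def, hlval] at hj
    omega
  -- hence `π l` is an isomorphism and `Δ l` is projective
  have hπmono : Mono (H.π l) := (H.shortExact l).exact.mono_g (hU.eq_of_src _ _)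
  have hπepi : Epi (H.π l) := (H.shortExact l).epi_g
  have hπiso : IsIso (H.π l) := isIso_of_mono_of_epi _
  have hPproj : Projective (H.P l) := by
    constructor
    intro E X' f e he
    obtain ⟨h, hh⟩ := H.projective.factors (biproduct.π H.P l ≫ f) e
    exact ⟨biproduct.ι H.P l ≫ h, by rw [Category.assoc, hh, biproduct.ι_π_self_assoc]⟩
  have hΔproj : Projective (H.Δ l) := Projective.of_iso (asIso (H.π l)) hPproj
  refine ⟨hΔproj, ?_⟩
  intro X hX
  induction hX with
  | of_isZero Y h0 =>
    intro r φ hind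
    rcases Nat.eq_zero_or_pos r with rfl | hr
    · rw [Preadditive.mono_iff_cancel_zero]
      intro Z g hg
      have hz : IsZero (⨁ fun _ : Fin 0 => H.Δ l) := by
        rw [IsZero.iff_id_eq_zero]
        apply biproduct.hom_ext
        intro i; exact i.elim0
      exact hz.eq_of_tgt _ _
    · exfalso
      have hφ : ∀ i, φ i = 0 := fun i => h0.eq_of_tgt _ _
      have h1 : (𝟙 (H.Δ l)) = 0 :=
        hind (fun _ => 𝟙 _) (by simp [hφ]) ⟨0, hr⟩
      exact (H.endo_division l).1 ((IsZero.iff_id_eq_zero _).mpr h1)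
  | step Sc hse h1 h3 ih =>
    intro r φ hind
    obtain ⟨j, ⟨e⟩⟩ := h3
    haveI hfmono : Mono Sc.f := hse.mono_f
    by_cases hall : ∀ i, φ i ≫ Sc.g = 0
    · -- Case A: everything factors through `X₁`
      have hψf : ∀ i, hse.exact.lift (φ i) (hall i) ≫ Sc.f = φ i :=
        fun i => hse.exact.lift_f _ _
      have hd : biproduct.desc φ
          = biproduct.desc (fun i => hse.exact.lift (φ i) (hall i)) ≫ Sc.f := by
        apply biproduct.hom_ext'
        intro i
        simp [hψf]
      rw [hd]
      have hm : Mono (biproduct.desc fun i => hse.exact.lift (φ i) (hall i)) := by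
        apply ih
        intro c hc i
        refine hind c ?_ i
        have h2 : (∑ i, c i ≫ hse.exact.lift (φ i) (hall i)) ≫ Sc.f = 0 := by
          rw [hc, zero_comp]
        rw [Preadditive.sum_comp] at h2
        simp only [Category.assoc, hψf] at h2
        exact h2
      exact mono_comp _ _
    · -- Case B: some composite with `g` is nonzero, so `X₃ ≅ Δ l`
      push_neg at hall
      obtain ⟨k, hk⟩ := hall
      have hrpos : 0 < r := k.pos
      obtain ⟨m, rfl⟩ : ∃ m, r = m + 1 := ⟨r - 1, by omega⟩
      have hjl : j = l := by
        by_contra hne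
        refine hk ?_
        have h0 : φ k ≫ Sc.g ≫ e.hom = 0 := H.hom_vanish l j (hmax j hne) _
        calc φ k ≫ Sc.g = (φ k ≫ Sc.g ≫ e.hom) ≫ e.inv := by simp
          _ = 0 := by rw [h0, zero_comp]
      subst hjl
      set χ : Fin (m + 1) → (H.Δ l ⟶ H.Δ l) := fun i => φ i ≫ Sc.g ≫ e.hom with hχ
      have hχdef : ∀ i, φ i ≫ Sc.g = χ i ≫ e.inv := by
        intro i; simp [hχ]
      have hχk : χ k ≠ 0 := by
        intro h
        refine hk ?_
        rw [hχdef k, h, zero_comp]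
      haveI hχiso : IsIso (χ k) := (H.endo_division l).2 _ hχk
      set d : Fin (m + 1) → (H.Δ l ⟶ H.Δ l) :=
        fun i => if i = k then 0 else χ i ≫ inv (χ k) with hdd
      have hdk : d k = 0 := if_pos rfl
      set φ' : Fin (m + 1) → (H.Δ l ⟶ Sc.X₂) := fun i => φ i - d i ≫ φ k with hφ'
      have hφ'k : φ' k = φ k := by simp [hφ', hdk]
      have hφ'g : ∀ i, i ≠ k → φ' i ≫ Sc.g = 0 := by
        intro i hi
        have : φ' i ≫ Sc.g = χ i ≫ e.inv - (χ i ≫ inv (χ k)) ≫ χ k ≫ e.inv := by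
          simp only [hφ', Preadditive.sub_comp, Category.assoc, hχdef, hdd, if_neg hi]
        rw [this, sub_eq_zero]
        simp
      have hφkg : Mono (φ k ≫ Sc.g) := by
        rw [hχdef k]
        infer_instance
      -- `φ'` is still independent
      have hind' : ∀ c : Fin (m + 1) → (H.Δ l ⟶ H.Δ l),
          (∑ i, c i ≫ φ' i) = 0 → ∀ i, c i = 0 := by
        intro c hc
        set s : H.Δ l ⟶ H.Δ l := ∑ i, c i ≫ d i with hs
        have hc2 : (∑ i, (fun i => if i = k then c k - s else c i) i ≫ φ i) = 0 := by
          have e1 : (∑ i, (fun i => if i = k then c k - s else c i) i ≫ φ i)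
              = (∑ i, c i ≫ φ i) - s ≫ φ k := by
            have e2 : ∀ i, (if i = k then c k - s else c i) ≫ φ i
                = c i ≫ φ i - (if i = k then s ≫ φ i else 0) := by
              intro i
              by_cases hik : i = k
              · subst hik; simp [Preadditive.sub_comp]
              · simp [hik]
            rw [Finset.sum_congr rfl (fun i _ => e2 i), Finset.sum_sub_distrib,
              Finset.sum_ite_eq' Finset.univ k (fun i => s ≫ φ i)]
            simp
          have e3 : (∑ i, c i ≫ φ' i) = (∑ i, c i ≫ φ i) - s ≫ φ k := by
            simp only [hφ', Preadditive.comp_sub, Finset.sum_sub_distrib]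
            rw [hs, Preadditive.sum_comp]
            simp [Category.assoc]
          rw [e1, ← e3, hc]
        have hzero := hind _ hc2
        have hne : ∀ i, i ≠ k → c i = 0 := by
          intro i hi
          have := hzero i
          simpa [hi] using this
        have hs0 : s = 0 := by
          rw [hs]
          refine Finset.sum_eq_zero fun i _ => ?_
          by_cases hik : i = k
          · subst hik; rw [hdk, comp_zero]
          · rw [hne i hik, zero_comp]
        intro i
        by_cases hik : i = k
        · rw [hik]
          have := hzero k
          simpa [hs0] using this
        · exact hne i hik
      -- change of basis matrix
      set M : (⨁ fun _ : Fin (m + 1) => H.Δ l) ⟶ (⨁ fun _ : Fin (m + 1) => H.Δ l) :=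
        biproduct.desc (fun i => d i ≫ biproduct.ι (fun _ : Fin (m + 1) => H.Δ l) k) with hM
      have hMM : M ≫ M = 0 := by
        apply biproduct.hom_ext'
        intro i
        rw [hM]
        simp [hdk]
      haveI hT : IsIso (𝟙 (⨁ fun _ : Fin (m + 1) => H.Δ l) + M) := by
        refine ⟨⟨𝟙 _ - M, ?_, ?_⟩⟩
        · simp only [Preadditive.add_comp, Preadditive.comp_sub, Category.comp_id,
            Category.id_comp, hMM]
          abel
        · simp only [Preadditive.sub_comp, Preadditive.comp_add, Category.comp_id,
            Category.id_comp, hMM]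
          abel
      have hfac : biproduct.desc φ
          = (𝟙 (⨁ fun _ : Fin (m + 1) => H.Δ l) + M) ≫ biproduct.desc φ' := by
        apply biproduct.hom_ext'
        intro i
        rw [biproduct.ι_desc, ← Category.assoc, Preadditive.comp_add, Category.comp_id,
          Preadditive.add_comp, biproduct.ι_desc, hM, biproduct.ι_desc, Category.assoc,
          biproduct.ι_desc, hφ'k, hφ']
        simp
      rw [hfac]
      have hmono' : Mono (biproduct.desc φ') := by
        rw [Preadditive.mono_iff_cancel_zero]
        intro Z u hu
        -- Step A : the `k`-component of `u` vanishes
        have hgk : biproduct.desc φ' ≫ Sc.g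
            = biproduct.π (fun _ : Fin (m + 1) => H.Δ l) k ≫ (φ k ≫ Sc.g) := by
          apply biproduct.hom_ext'
          intro i
          by_cases hi : i = k
          · subst hi
            rw [← Category.assoc, biproduct.ι_desc, hφ'k, ← Category.assoc,
              biproduct.ι_π_self, Category.id_comp]
          · rw [← Category.assoc, biproduct.ι_desc, hφ'g i hi, ← Category.assoc,
              biproduct.ι_π_ne _ hi, zero_comp]
        have huπk : u ≫ biproduct.π (fun _ : Fin (m + 1) => H.Δ l) k = 0 := by
          haveI := hφkg
          refine zero_of_comp_mono (φ k ≫ Sc.g) ?_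
          rw [Category.assoc, ← hgk, ← Category.assoc, hu, zero_comp]
        -- Step B : restriction to the complement of `k`
        have hψgood : ∀ i : Fin m, φ' (k.succAbove i) ≫ Sc.g = 0 :=
          fun i => hφ'g _ (Fin.succAbove_ne k i)
        set ψ : Fin m → (H.Δ l ⟶ Sc.X₁) :=
          fun i => hse.exact.lift (φ' (k.succAbove i)) (hψgood i) with hψ
        have hψf : ∀ i, ψ i ≫ Sc.f = φ' (k.succAbove i) :=
          fun i => hse.exact.lift_f _ _
        have hψind : ∀ c : Fin m → (H.Δ l ⟶ H.Δ l),
            (∑ i, c i ≫ ψ i) = 0 → ∀ i, c i = 0 := by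
          intro c hc i
          set ct : Fin (m + 1) → (H.Δ l ⟶ H.Δ l) :=
            k.insertNth (0 : H.Δ l ⟶ H.Δ l) c with hct
          have hctk : ct k = 0 := Fin.insertNth_apply_same k _ _
          have hcts : ∀ i', ct (k.succAbove i') = c i' :=
            fun i' => Fin.insertNth_apply_succAbove k _ _ _
          have h2 : (∑ i', ct i' ≫ φ' i') = 0 := by
            rw [Fin.sum_univ_succAbove (fun i' => ct i' ≫ φ' i') k]
            rw [hctk, zero_comp, zero_add]
            calc (∑ i', ct (k.succAbove i') ≫ φ' (k.succAbove i'))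
                = ∑ i', c i' ≫ (ψ i' ≫ Sc.f) := by
                  refine Finset.sum_congr rfl fun i' _ => ?_
                  rw [hcts, hψf]
              _ = (∑ i', c i' ≫ ψ i') ≫ Sc.f := by
                  rw [Preadditive.sum_comp]
                  simp [Category.assoc]
              _ = 0 := by rw [hc, zero_comp]
          have h3 := hind' _ h2 (k.succAbove i)
          rwa [hcts] at h3
        haveI hmψ : Mono (biproduct.desc ψ) := ih m ψ hψind
        set I : (⨁ fun _ : Fin m => H.Δ l) ⟶ (⨁ fun _ : Fin (m + 1) => H.Δ l) :=
          biproduct.desc (fun i => biproduct.ι (fun _ : Fin (m + 1) => H.Δ l)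
            (k.succAbove i)) with hI
        set R : (⨁ fun _ : Fin (m + 1) => H.Δ l) ⟶ (⨁ fun _ : Fin m => H.Δ l) :=
          biproduct.lift (fun i => biproduct.π (fun _ : Fin (m + 1) => H.Δ l)
            (k.succAbove i)) with hR
        have hIdesc : I ≫ biproduct.desc φ' = biproduct.desc ψ ≫ Sc.f := by
          apply biproduct.hom_ext'
          intro i
          rw [hI, ← Category.assoc, biproduct.ι_desc, biproduct.ι_desc,
            ← Category.assoc, biproduct.ι_desc, hψf]
        have huRI : u = (u ≫ R) ≫ I := by
          apply biproduct.hom_ext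
          intro j'
          by_cases hj : j' = k
          · rw [hj, huπk]
            have hIk : I ≫ biproduct.π (fun _ : Fin (m + 1) => H.Δ l) k = 0 := by
              apply biproduct.hom_ext'
              intro i
              rw [hI, ← Category.assoc, biproduct.ι_desc,
                biproduct.ι_π_ne _ (Fin.succAbove_ne k i), comp_zero]
            rw [Category.assoc, Category.assoc, hIk, comp_zero, comp_zero]
          · obtain ⟨j'', rfl⟩ := Fin.exists_succAbove_eq hj
            have hIπ : I ≫ biproduct.π (fun _ : Fin (m + 1) => H.Δ l) (k.succAbove j'')
                = biproduct.π (fun _ : Fin m => H.Δ l) j'' := by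
              apply biproduct.hom_ext'
              intro i
              rw [hI, ← Category.assoc, biproduct.ι_desc]
              by_cases hij : i = j''
              · subst hij
                rw [biproduct.ι_π_self, biproduct.ι_π_self]
              · have hne2 : k.succAbove i ≠ k.succAbove j'' :=
                  fun hh => hij (Fin.succAbove_right_injective hh)
                rw [biproduct.ι_π_ne _ hne2, biproduct.ι_π_ne _ hij]
            rw [Category.assoc, Category.assoc, hIπ, hR, biproduct.lift_π]
        have h4 : ((u ≫ R) ≫ biproduct.desc ψ) ≫ Sc.f = 0 := by
          rw [Category.assoc, ← hIdesc, ← Category.assoc, ← huRI, hu]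
        have h5 : (u ≫ R) ≫ biproduct.desc ψ = 0 := zero_of_comp_mono _ h4
        have h6 : u ≫ R = 0 := zero_of_comp_mono _ h5
        rw [huRI, h6, zero_comp]
      exact mono_comp _ _
end

section
/- Let (i_*, i^*, j_!, j^!) be a colocalisation sequence of abelian categories A' → A → A'' where A has enough projectives and j^! preserves projectivity. If for every projective object X of A the counit j_!j^!(X) → X is a monomorphism, then the full additive subcategory Filt(P', P'') of A generated under extensions by the projectives of A' (embedded via i_*) and the projectives of A'' (embedded via j_!) contains every projective object of A; in particular every projective X sits in a short exact sequence 0 → j_!j^!(X) → X → i_*i^*(X) → 0. -/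
open CategoryTheory Limits

/-!
STATEMENT 19: Let `(i_*, i^*, j_!, j^!)` be a colocalisation sequence of
abelian categories `A' → A → A''` where `A` has enough projectives and `j^!`
preserves projectivity.  If for every projective `X` in `A` the counit
`j_! j^! X → X` is a monomorphism, then the extension closure `Filt(P', P'')`
of the projectives of `A'` (embedded by `i_*`) and the projectives of `A''`
(embedded by `j_!`) contains every projective object of `A`; in particular
every projective `X` sits in a short exact sequence
`0 → j_! j^! X → X → i_* i^* X → 0`.
-/

universe v u

variable {A' A A'' : Type u} [Category.{v} A'] [Category.{v} A] [Category.{v} A'']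
variable [Abelian A'] [Abelian A] [Abelian A'']

/-- The smallest extension-closed collection of objects containing the zero
objects and the objects satisfying `S`. -/
inductive ExtClosure (S : A → Prop) : A → Prop
  | of (X : A) : S X → ExtClosure S X
  | of_isZero (X : A) : IsZero X → ExtClosure S X
  | step (Sc : ShortComplex A) : Sc.ShortExact →
      ExtClosure S Sc.X₁ → ExtClosure S Sc.X₃ → ExtClosure S Sc.X₂

theorem projectives_filtered_of_counit_mono
    -- the colocalisation sequence
    (i : A' ⥤ A) (q : A ⥤ A'')
    (_ : PreservesFiniteLimits i) (_ : PreservesFiniteColimits i)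
    (_ : PreservesFiniteLimits q) (_ : PreservesFiniteColimits q)
    (p : A ⥤ A') (adjP : p ⊣ i)
    (jL : A'' ⥤ A) (adjJ : jL ⊣ q)
    (_ : i.Full) (_ : i.Faithful) (_ : jL.Full) (_ : jL.Faithful)
    (hker : ∀ X : A, IsZero (q.obj X) ↔ i.essImage X)
    -- `A` has enough projectives and `j^!` preserves projectivity
    [EnoughProjectives A]
    (hq : ∀ X : A, Projective X → Projective (q.obj X))
    -- the counit is a monomorphism on projectives
    (hmono : ∀ X : A, Projective X → Mono (adjJ.counit.app X)) :
    ∀ X : A, Projective X →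
      (ExtClosure (fun Z : A =>
          (∃ P' : A', Projective P' ∧ Nonempty (Z ≅ i.obj P')) ∨
          (∃ P'' : A'', Projective P'' ∧ Nonempty (Z ≅ jL.obj P''))) X ∧
        ∃ w : adjJ.counit.app X ≫ adjP.unit.app X = 0,
          (ShortComplex.mk (adjJ.counit.app X) (adjP.unit.app X) w).ShortExact) := by
  haveI : PreservesFiniteLimits i := ‹_›
  haveI : PreservesFiniteColimits i := ‹_›
  haveI : PreservesFiniteLimits q := ‹_›
  haveI : PreservesFiniteColimits q := ‹_›
  haveI : i.Full := ‹_›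
  haveI : i.Faithful := ‹_›
  haveI : jL.Full := ‹_›
  haveI : jL.Faithful := ‹_›
  haveI : q.IsRightAdjoint := ⟨jL, ⟨adjJ⟩⟩
  intro X hX
  haveI := hX
  haveI : Mono (adjJ.counit.app X) := hmono X hX
  set c : jL.obj (q.obj X) ⟶ X := adjJ.counit.app X with hcdef
  set u : X ⟶ i.obj (p.obj X) := adjP.unit.app X with hudef
  -- `c ≫ u = 0` since the target lies in the image of `i`, killed by `q`
  have hz : IsZero (q.obj (i.obj (p.obj X))) :=
    (hker _).mpr ⟨p.obj X, ⟨Iso.refl _⟩⟩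
  have w : c ≫ u = 0 := (adjJ.homEquiv _ _).injective (hz.eq_of_tgt _ _)
  -- `q.map c` is an isomorphism
  haveI : IsIso (q.map c) := by
    haveI : IsIso (adjJ.unit.app (q.obj X) ≫ q.map c) := by
      rw [hcdef, adjJ.right_triangle_components X]; exact IsIso.id _
    exact IsIso.of_isIso_comp_left (adjJ.unit.app (q.obj X)) (q.map c)
  -- hence `q` kills the cokernel of `c`
  have hqπ : q.map (cokernel.π c) = 0 := by
    have h0 : q.map c ≫ q.map (cokernel.π c) = 0 := by
      rw [← q.map_comp, cokernel.condition, q.map_zero]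
    exact zero_of_epi_comp (q.map c) h0
  have hzC : IsZero (q.obj (cokernel c)) := by
    haveI : Epi (q.map (cokernel.π c)) := q.map_epi _
    exact IsZero.of_epi_eq_zero _ hqπ
  obtain ⟨B, ⟨e⟩⟩ := (hker _).mp hzC
  -- the comparison maps between `cokernel c` and `i (p X)`
  set t : cokernel c ⟶ i.obj (p.obj X) := cokernel.desc c u w with htdef
  have hπt : cokernel.π c ≫ t = u := cokernel.π_desc c u w
  set φ : X ⟶ i.obj B := cokernel.π c ≫ e.inv with hφdef
  set ψ : p.obj X ⟶ B := (adjP.homEquiv X B).symm φ with hψdef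
  set s : i.obj (p.obj X) ⟶ cokernel c := i.map ψ ≫ e.hom with hsdef
  have hus : u ≫ s = cokernel.π c := by
    have h1 : u ≫ i.map ψ = φ := by
      have h2 := (adjP.homEquiv X B).apply_symm_apply φ
      rw [Adjunction.homEquiv_unit] at h2
      exact h2
    rw [hsdef, ← Category.assoc, h1, hφdef, Category.assoc, e.inv_hom_id,
      Category.comp_id]
  have hts : t ≫ s = 𝟙 (cokernel c) := by
    rw [← cancel_epi (cokernel.π c), ← Category.assoc, hπt, hus, Category.comp_id]
  have hst : s ≫ t = 𝟙 (i.obj (p.obj X)) := by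
    have h1 : u ≫ (s ≫ t) = u := by
      rw [← Category.assoc, hus, hπt]
    have h2 : (adjP.homEquiv X (p.obj X)) (i.preimage (s ≫ t)) =
        (adjP.homEquiv X (p.obj X)) (𝟙 (p.obj X)) := by
      simp only [Adjunction.homEquiv_unit, i.map_preimage, i.map_id,
        Category.comp_id]
      simpa using h1
    have h3 := (adjP.homEquiv X (p.obj X)).injective h2
    calc s ≫ t = i.map (i.preimage (s ≫ t)) := (i.map_preimage _).symm
      _ = i.map (𝟙 (p.obj X)) := by rw [h3]
      _ = 𝟙 (i.obj (p.obj X)) := i.map_id _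
  haveI : IsIso t := ⟨s, hts, hst⟩
  haveI hEpiU : Epi u := by
    have h := epi_comp (cokernel.π c) t
    rwa [hπt] at h
  -- `u` is a cokernel of `c`
  have hcolim : IsColimit (CokernelCofork.ofπ u w) :=
    CokernelCofork.IsColimit.ofπ' u w (fun {W} k hk =>
      ⟨s ≫ cokernel.desc c k hk, by
        rw [← Category.assoc, hus, cokernel.π_desc]⟩)
  have hSE : (ShortComplex.mk c u w).ShortExact :=
    { exact := ShortComplex.exact_of_g_is_cokernel _ hcolim
      mono_f := by assumption
      epi_g := by assumption }
  refine ⟨?_, w, hSE⟩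
  exact ExtClosure.step (ShortComplex.mk c u w) hSE
    (ExtClosure.of _ (Or.inr ⟨q.obj X, hq X hX, ⟨Iso.refl _⟩⟩))
    (ExtClosure.of _ (Or.inl ⟨p.obj X, adjP.map_projective X hX, ⟨Iso.refl _⟩⟩))
end
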